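/- (Sign-change semicontinuity) Let (x_k) be a sequence in ℝ^n converging to x ≠ 0. Then liminf_{k→∞} S^-(x_k) ≥ S^-(x) and limsup_{k→∞} S^+(x_k) ≤ S^+(x). -/

import Mathlib

open Matrix Filter

/-- Number of sign changes in a list of reals (consecutive pairs with negative product). -/
noncomputable def signChanges (l : List ℝ) : ℕ :=
  (l.zip l.tail).countP (fun p => decide (p.1 * p.2 < 0))

/-- `S^-(v)`: sign changes of the coordinates of `v` after discarding zero entries. -/
noncomputable def Sm {n : ℕ} (v : Fin n → ℝ) : ℕ :=
  signChanges ((List.ofFn v).filter (fun x => decide (x ≠ 0)))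

/-- `S^+(v)`: maximal number of sign changes over all ±1 completions of the zero
entries of `v`, with the convention `S^+(0) = n`. -/
noncomputable def Sp {n : ℕ} (v : Fin n → ℝ) : ℕ :=
  if v = 0 then n
  else Finset.univ.sup (fun σ : Fin n → Bool =>
    signChanges (List.ofFn (fun i => if v i = 0 then (if σ i then (1:ℝ) else -1) else v i)))

/-- First nonzero entry of a vector (`0` if the vector is zero). -/
noncomputable def firstNz {n : ℕ} (v : Fin n → ℝ) : ℝ :=
  ((List.ofFn v).filter (fun x => decide (x ≠ 0))).headI

/-- `A` is strictly sign regular with sign pattern `ε`: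
every `r × r` minor (`1 ≤ r ≤ min m n`) is nonzero with sign `ε r`. -/
def ssrPattern {m n : ℕ} (A : Matrix (Fin m) (Fin n) ℝ) (ε : ℕ → ℝ) : Prop :=
  ∀ r : ℕ, 1 ≤ r → r ≤ min m n → ∀ (f : Fin r → Fin m) (g : Fin r → Fin n),
    StrictMono f → StrictMono g → 0 < ε r * (A.submatrix f g).det

/-- `A` is sign regular with sign pattern `ε`:
every nonzero `r × r` minor (`1 ≤ r ≤ min m n`) has sign `ε r`. -/
def srPattern {m n : ℕ} (A : Matrix (Fin m) (Fin n) ℝ) (ε : ℕ → ℝ) : Prop :=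
  ∀ r : ℕ, 1 ≤ r → r ≤ min m n → ∀ (f : Fin r → Fin m) (g : Fin r → Fin n),
    StrictMono f → StrictMono g → 0 ≤ ε r * (A.submatrix f g).det

/-- The map `f` picks out consecutive indices. -/
def Contig {r m : ℕ} (f : Fin r → Fin m) : Prop :=
  ∃ a : ℕ, ∀ i : Fin r, (f i : ℕ) = a + (i : ℕ)

lemma sc_nil : signChanges [] = 0 := rfl
lemma sc_single (a : ℝ) : signChanges [a] = 0 := rfl
lemma sc_cons_cons (a b : ℝ) (t : List ℝ) :
    signChanges (a :: b :: t) = (if a * b < 0 then 1 else 0) + signChanges (b :: t) := by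
  simp [signChanges, List.countP_cons]
  by_cases h : a*b < 0 <;> simp [h] <;> omega

lemma sc_le_cons (a : ℝ) (l : List ℝ) : signChanges l ≤ signChanges (a :: l) := by
  cases l with
  | nil => simp [sc_nil, sc_single]
  | cons b t => rw [sc_cons_cons]; omega

lemma chg_triangle {a b c : ℝ} (hb : b ≠ 0) :
    (if a * c < 0 then 1 else 0) ≤ (if a * b < 0 then (1:ℕ) else 0) + (if b * c < 0 then 1 else 0) := by
  by_cases h : a * c < 0
  · have : a * b < 0 ∨ b * c < 0 := by
      rcases lt_trichotomy b 0 with h1 | h1 | h1 <;> rcases lt_trichotomy a 0 with h2 | h2 | h2 <;>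
        [skip; skip; skip; skip; skip; skip; skip; skip; skip] <;> first
        | (left; nlinarith) | (right; nlinarith) | (exfalso; exact hb h1) | (exfalso; nlinarith)
    rcases this with h' | h' <;> simp [h, h'] <;> omega
  · simp [h]

lemma sc_cons_mono : ∀ {s t : List ℝ}, s.Sublist t → (∀ b ∈ t, b ≠ 0) →
    ∀ a : ℝ, signChanges (a :: s) ≤ signChanges (a :: t) := by
  intro s t h
  induction h with
  | slnil => intro _ _; exact le_rfl
  | @cons s t b h ih =>
      intro ht a
      have ht' : ∀ c ∈ t, c ≠ 0 := fun c hc => ht c (List.mem_cons_of_mem _ hc)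
      have h1 := ih ht' a
      refine h1.trans ?_
      cases t with
      | nil => simp [sc_single]
      | cons c t' =>
          rw [sc_cons_cons a c, sc_cons_cons a b, sc_cons_cons b c]
          have := chg_triangle (a := a) (b := b) (c := c) (ht b (by simp))
          omega
  | @cons_cons s t b h ih =>
      intro ht a
      have ht' : ∀ c ∈ t, c ≠ 0 := fun c hc => ht c (List.mem_cons_of_mem _ hc)
      rw [sc_cons_cons a b, sc_cons_cons a b]
      exact Nat.add_le_add_left (ih ht' b) _

lemma sc_mono {s t : List ℝ} (h : s.Sublist t) (ht : ∀ b ∈ t, b ≠ 0) :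
    signChanges s ≤ signChanges t := by
  induction h with
  | slnil => exact le_rfl
  | @cons s t b h ih =>
      exact (ih (fun c hc => ht c (List.mem_cons_of_mem _ hc))).trans (sc_le_cons b t)
  | @cons_cons s t b h ih =>
      exact sc_cons_mono h (fun c hc => ht c (List.mem_cons_of_mem _ hc)) b

lemma sc_congr : ∀ {s t : List ℝ}, List.Forall₂ (fun a b => 0 < a * b) s t →
    signChanges s = signChanges t := by
  intro s t h
  induction h with
  | nil => rfl
  | @cons a b s t hab h ih =>
      cases h with
      | nil => rfl
      | @cons a' b' s' t' hab' h' =>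
          rw [sc_cons_cons a a', sc_cons_cons b b']
          have hsame : (a * a' < 0) ↔ (b * b' < 0) := by
            constructor <;> intro hlt <;> nlinarith
          rw [ih]
          congr 1
          simp [hsame]

lemma sm_le {n : ℕ} {x y : Fin n → ℝ} (h : ∀ i, x i ≠ 0 → 0 < x i * y i) :
    Sm x ≤ Sm y := by
  classical
  set L : List (ℝ × ℝ) := List.ofFn (fun i => (x i, y i)) with hL
  have hmem : ∀ p ∈ L, p.1 ≠ 0 → 0 < p.1 * p.2 := by
    intro p hp
    rw [hL, List.mem_ofFn] at hp
    obtain ⟨i, rfl⟩ := hp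
    exact h i
  have hx' : List.ofFn x = L.map Prod.fst := by
    rw [hL, List.map_ofFn]; rfl
  have hy' : List.ofFn y = L.map Prod.snd := by
    rw [hL, List.map_ofFn]; rfl
  set p : ℝ × ℝ → Bool := fun q => decide (q.1 ≠ 0) with hp
  set q : ℝ × ℝ → Bool := fun r => decide (r.2 ≠ 0) with hq
  have hfx : (List.ofFn x).filter (fun a => decide (a ≠ 0)) = (L.filter p).map Prod.fst := by
    rw [hx', List.filter_map]; rfl
  have hfy : (List.ofFn y).filter (fun a => decide (a ≠ 0)) = (L.filter q).map Prod.snd := by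
    rw [hy', List.filter_map]; rfl
  -- sign equality between fst and snd of L.filter p
  have hcongr : signChanges ((L.filter p).map Prod.fst) = signChanges ((L.filter p).map Prod.snd) := by
    apply sc_congr
    rw [List.forall₂_map_left_iff, List.forall₂_map_right_iff]
    apply List.forall₂_same.2
    intro r hr
    have hr1 : p r = true := List.of_mem_filter hr
    have hr2 : r ∈ L := List.mem_of_mem_filter hr
    exact hmem r hr2 (by simpa [hp] using hr1)
  -- sublist
  have hsub : (L.filter p).Sublist (L.filter q) := by
    have : L.filter p = (L.filter q).filter p := by
      rw [List.filter_filter]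
      apply List.filter_congr
      intro r hr
      have := hmem r hr
      by_cases h1 : r.1 = 0
      · simp [hp, hq, h1]
      · have h2 : r.2 ≠ 0 := by
          intro h2; rw [h2, mul_zero] at this; exact lt_irrefl 0 (this h1)
        simp [hp, hq, h1, h2]
    rw [this]
    exact List.filter_sublist
  have hnz : ∀ b ∈ (L.filter q).map Prod.snd, b ≠ 0 := by
    intro b hb
    obtain ⟨r, hr, rfl⟩ := List.mem_map.1 hb
    have := List.of_mem_filter hr
    simpa [hq] using this
  rw [Sm, Sm, hfx, hfy, hcongr]
  exact sc_mono (hsub.map Prod.snd) hnz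

lemma forall₂_ofFn {n : ℕ} {R : ℝ → ℝ → Prop} {u w : Fin n → ℝ} (h : ∀ i, R (u i) (w i)) :
    List.Forall₂ R (List.ofFn u) (List.ofFn w) := by
  rw [List.forall₂_iff_get]
  refine ⟨by simp, fun i h1 h2 => ?_⟩
  rw [List.get_ofFn, List.get_ofFn]
  exact h _

lemma sp_le {n : ℕ} {x y : Fin n → ℝ} (hx : x ≠ 0) (hy : y ≠ 0)
    (h : ∀ i, x i ≠ 0 → 0 < x i * y i) : Sp y ≤ Sp x := by
  classical
  rw [Sp, Sp, if_neg hx, if_neg hy]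
  apply Finset.sup_le
  intro σ _
  set σ' : Fin n → Bool := fun i => if y i = 0 then σ i else decide (0 < y i) with hσ'
  have key : signChanges (List.ofFn (fun i => if y i = 0 then (if σ i then (1:ℝ) else -1) else y i))
      = signChanges (List.ofFn (fun i => if x i = 0 then (if σ' i then (1:ℝ) else -1) else x i)) := by
    apply sc_congr
    apply forall₂_ofFn
    intro i
    by_cases hxi : x i = 0
    · by_cases hyi : y i = 0
      · simp only [hxi, hyi, if_pos, hσ', if_pos rfl]
        cases σ i <;> norm_num
      · have e1 : (if y i = 0 then (if σ i then (1:ℝ) else -1) else y i) = y i := if_neg hyi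
        have e2 : σ' i = decide (0 < y i) := if_neg hyi
        rw [e1, if_pos hxi, e2]
        rcases lt_trichotomy (y i) 0 with h1 | h1 | h1
        · rw [decide_eq_false h1.not_gt, if_neg (by simp : ¬(false = true))]; nlinarith
        · exact absurd h1 hyi
        · rw [decide_eq_true h1, if_pos rfl]; nlinarith
    · have hyi : y i ≠ 0 := by
        intro h2
        have := h i hxi
        rw [h2, mul_zero] at this
        exact lt_irrefl 0 this
      simp only [if_neg hxi, if_neg hyi]
      have := h i hxi
      nlinarith
  rw [key]
  exact Finset.le_sup (f := fun σ : Fin n → Bool => signChanges (List.ofFn (fun i => if x i = 0 then (if σ i then (1:ℝ) else -1) else x i))) (Finset.mem_univ σ')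

lemma sc_le_length (l : List ℝ) : signChanges l ≤ l.length := by
  calc signChanges l ≤ (l.zip l.tail).length := List.countP_le_length
    _ ≤ l.length := by rw [List.length_zip]; omega

lemma sm_le_n {n : ℕ} (v : Fin n → ℝ) : Sm v ≤ n := by
  calc Sm v ≤ ((List.ofFn v).filter (fun x => decide (x ≠ 0))).length := sc_le_length _
    _ ≤ (List.ofFn v).length := List.length_filter_le _ _
    _ = n := List.length_ofFn

theorem stmt10 {n : ℕ} (xk : ℕ → (Fin n → ℝ)) (x : Fin n → ℝ) (hx : x ≠ 0)
    (hconv : Filter.Tendsto xk Filter.atTop (nhds x)) :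
    Sm x ≤ Filter.liminf (fun k => Sm (xk k)) Filter.atTop ∧
      Filter.limsup (fun k => Sp (xk k)) Filter.atTop ≤ Sp x := by
  classical
  have hev : ∀ᶠ k in Filter.atTop, ∀ i, x i ≠ 0 → 0 < x i * xk k i := by
    rw [Filter.eventually_all]
    intro i
    by_cases hxi : x i = 0
    · exact Filter.Eventually.of_forall (fun k h => absurd hxi h)
    · have hti : Filter.Tendsto (fun k => xk k i) Filter.atTop (nhds (x i)) :=
        ((continuous_apply i).continuousAt.tendsto).comp hconv
      have htm : Filter.Tendsto (fun k => x i * xk k i) Filter.atTop (nhds (x i * x i)) :=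
        hti.const_mul _
      have hpos : 0 < x i * x i := by
        rcases lt_trichotomy (x i) 0 with h|h|h
        · nlinarith
        · exact absurd h hxi
        · nlinarith
      exact (htm.eventually (lt_mem_nhds hpos)).mono (fun k hk _ => hk)
  obtain ⟨i₀, hi₀⟩ : ∃ i, x i ≠ 0 := Function.ne_iff.1 hx
  have hevnz : ∀ᶠ k in Filter.atTop, xk k ≠ 0 := by
    refine hev.mono (fun k hk h0 => ?_)
    have := hk i₀ hi₀
    rw [h0] at this
    simp at this
  constructor
  · refine Filter.le_liminf_of_le ?_ (hev.mono (fun k hk => sm_le hk))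
    exact Filter.isCoboundedUnder_ge_of_eventually_le Filter.atTop
      (Filter.Eventually.of_forall (fun k => sm_le_n (xk k)))
  · refine Filter.limsup_le_of_le ?_ ((hev.and hevnz).mono (fun k hk => sp_le hx hk.2 hk.1))
    exact Filter.isCoboundedUnder_le_of_le Filter.atTop (fun k => Nat.zero_le _)
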